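/- Let σ be a semigroup automorphism of (IS_n, *), and let g ∈ S(A), h₁, h₂ ∈ S(Ā) be such that σ([s ↦ t]) = [(g⋈h₁)(s) ↦ (g⋈h₂)(t)] for all s, t ∈ N. Then for every decomposable a ∈ IS_n with dom(a) = {x₁,...,x_l} and a(xᵢ) = yᵢ, one has dom(σ(a)) = {(g⋈h₁)(x₁),...,(g⋈h₁)(x_l)} and σ(a)((g⋈h₁)(xᵢ)) = (g⋈h₂)(yᵢ) for all 1 ≤ i ≤ l; that is, σ(a) = (g⋈h₁)⁻¹ · a · (g⋈h₂) = τ_(g,h₁,h₂)(a) on all decomposable elements. -/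

import Mathlib

open Equiv

/-- `IS n` : the symmetric inverse semigroup on `{1,…,n}`, modeled as partial
equivalences of `Fin n`.  Composition is left-to-right: `(x.trans y) t = y (x t)`. -/
abbrev IS (n : ℕ) := PEquiv (Fin n) (Fin n)

/-- The domain of a partial injective transformation. -/
def sdom {n : ℕ} (x : IS n) : Set (Fin n) := {a | (x a).isSome}

/-- The image of a partial injective transformation. -/
def sim {n : ℕ} (x : IS n) : Set (Fin n) := {b | (x.symm b).isSome}

/-- The rank of a partial injective transformation: the cardinality of its image. -/
noncomputable def srank {n : ℕ} (x : IS n) : ℕ := Nat.card (sim x)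

/-- The set `A = {1,…,k}` inside `Fin n`, i.e. the first `k` elements. -/
def SetA (n k : ℕ) : Set (Fin n) := {i | (i : ℕ) < k}

/-- The idempotent `e` acting identically on `A`, with `dom e = im e = A`. -/
def sandE (n k : ℕ) : IS n where
  toFun i := if (i : ℕ) < k then some i else none
  invFun i := if (i : ℕ) < k then some i else none
  inv a b := by
    try dsimp only
    split_ifs with h1 h2 <;>
      simp_all [Option.mem_def, eq_comm] <;> rintro rfl <;> omega

/-- The sandwich multiplication `x * y = x e y` (left-to-right composition). -/
def smul (n k : ℕ) (x y : IS n) : IS n := (x.trans (sandE n k)).trans y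

/-- `a` is decomposable in `(IS_n, *)` if `a = b * c` for some `b, c`. -/
def Decomp (n k : ℕ) (a : IS n) : Prop := ∃ b c : IS n, smul n k b c = a

/-- `M₁(a) = {x ∈ dom a : x ∈ A, a x ∈ A}`. -/
def M1 (n k : ℕ) (a : IS n) : Set (Fin n) :=
  {x | x ∈ SetA n k ∧ ∃ y ∈ SetA n k, a x = some y}

/-- `M₂(a) = {x ∈ dom a : x ∈ A, a x ∈ Ā}`. -/
def M2 (n k : ℕ) (a : IS n) : Set (Fin n) :=
  {x | x ∈ SetA n k ∧ ∃ y, y ∉ SetA n k ∧ a x = some y}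

/-- `M₃(a) = {x ∈ dom a : x ∈ Ā, a x ∈ A}`. -/
def M3 (n k : ℕ) (a : IS n) : Set (Fin n) :=
  {x | x ∉ SetA n k ∧ ∃ y ∈ SetA n k, a x = some y}

/-- The relation `∼` : for indecomposable `a, b`, `a ∼ b` iff `Mᵢ(a) = Mᵢ(b)` for
`i = 1,2,3` and `a x = b x` on `M₁(a) ∪ M₂(a) ∪ M₃(a)`; if `a` or `b` is
decomposable, `a ∼ b` iff `a = b`. -/
def SimRel (n k : ℕ) (a b : IS n) : Prop :=
  (¬ Decomp n k a ∧ ¬ Decomp n k b ∧ M1 n k a = M1 n k b ∧ M2 n k a = M2 n k b ∧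
    M3 n k a = M3 n k b ∧ ∀ x ∈ M1 n k a ∪ M2 n k a ∪ M3 n k a, a x = b x)
  ∨ ((Decomp n k a ∨ Decomp n k b) ∧ a = b)

/-- `g⋈h` : the permutation of `Fin n` acting as `g` on `A` and as `h` on `Ā`. -/
def bowtie {n : ℕ} (k : ℕ) (g : Perm {x : Fin n // (x : ℕ) < k})
    (h : Perm {x : Fin n // ¬ (x : ℕ) < k}) : Perm (Fin n) :=
  Equiv.Perm.subtypeCongr g h

/-- `τ_(g,h₁,h₂) : a ↦ (g⋈h₁)⁻¹ · a · (g⋈h₂)` (ordinary, left-to-right, composition). -/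
def tauMap {n : ℕ} (k : ℕ) (g : Perm {x : Fin n // (x : ℕ) < k})
    (h₁ h₂ : Perm {x : Fin n // ¬ (x : ℕ) < k}) (a : IS n) : IS n :=
  ((bowtie k g h₁).symm.toPEquiv.trans a).trans (bowtie k g h₂).toPEquiv

section aux

variable {n k : ℕ}

private lemma IS_trans_apply (f g : IS n) (u : Fin n) : f.trans g u = (f u).bind g := rfl

private lemma sandE_apply (i : Fin n) : sandE n k i = if (i:ℕ) < k then some i else none := rfl

private lemma sandE_mem {i : Fin n} (hi : (i:ℕ) < k) : i ∈ sandE n k i := by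
  simp [Option.mem_def, sandE_apply, hi]

private lemma bind_sandE_lt {o : Option (Fin n)} {w : Fin n}
    (h : o.bind (sandE n k) = some w) : (w:ℕ) < k := by
  rcases o with _ | v
  · simp at h
  · rw [Option.bind_some, sandE_apply] at h
    by_cases hv : (v:ℕ) < k
    · rw [if_pos hv] at h
      cases h
      exact hv
    · rw [if_neg hv] at h
      cases h

private lemma bowtie_apply_of_lt (g : Perm {x : Fin n // (x : ℕ) < k})
    (h : Perm {x : Fin n // ¬ (x : ℕ) < k}) {x : Fin n} (hx : (x:ℕ) < k) :
    bowtie k g h x = ↑(g ⟨x, hx⟩) :=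
  Equiv.Perm.subtypeCongr.left_apply g h hx

private lemma bowtie_lt {g : Perm {x : Fin n // (x : ℕ) < k}}
    {h : Perm {x : Fin n // ¬ (x : ℕ) < k}} {x : Fin n} (hx : (x:ℕ) < k) :
    ((bowtie k g h x : Fin n) : ℕ) < k := by
  rw [bowtie_apply_of_lt g h hx]
  exact (g ⟨x, hx⟩).2

private lemma bowtie_apply_of_not_lt (g : Perm {x : Fin n // (x : ℕ) < k})
    (h : Perm {x : Fin n // ¬ (x : ℕ) < k}) {x : Fin n} (hx : ¬ (x:ℕ) < k) :
    bowtie k g h x = ↑(h ⟨x, hx⟩) :=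
  Equiv.Perm.subtypeCongr.right_apply g h hx

private lemma bowtie_not_lt {g : Perm {x : Fin n // (x : ℕ) < k}}
    {h : Perm {x : Fin n // ¬ (x : ℕ) < k}} {x : Fin n} (hx : ¬ (x:ℕ) < k) :
    ¬ ((bowtie k g h x : Fin n) : ℕ) < k := by
  rw [bowtie_apply_of_not_lt g h hx]
  exact (h ⟨x, hx⟩).2

private lemma bowtie_congr (g : Perm {x : Fin n // (x : ℕ) < k})
    (h₁ h₂ : Perm {x : Fin n // ¬ (x : ℕ) < k}) {x : Fin n} (hx : (x:ℕ) < k) :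
    bowtie k g h₁ x = bowtie k g h₂ x := by
  rw [bowtie_apply_of_lt g h₁ hx, bowtie_apply_of_lt g h₂ hx]

end aux

/-- if an automorphism `σ` of `(IS_n, *)` acts on rank-one elements
via `g, h₁, h₂`, then on every decomposable `a` one has
`dom (σ a) = (g⋈h₁)(dom a)`, `σ a ((g⋈h₁) x) = (g⋈h₂)(a x)` on `dom a`, i.e.
`σ a = τ_(g,h₁,h₂) a`. -/
theorem aut_eq_tau_on_decomposable (n k : ℕ) (hk : 1 ≤ k) (hkn : k ≤ n)
    (σ : Equiv.Perm (IS n))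
    (hσ : ∀ x y : IS n, σ (smul n k x y) = smul n k (σ x) (σ y))
    (g : Perm {x : Fin n // (x : ℕ) < k})
    (h₁ h₂ : Perm {x : Fin n // ¬ (x : ℕ) < k})
    (hform : ∀ s t : Fin n, σ (PEquiv.single s t) =
      PEquiv.single (bowtie k g h₁ s) (bowtie k g h₂ t)) :
    ∀ a : IS n, Decomp n k a →
      sdom (σ a) = bowtie k g h₁ '' sdom a ∧
      (∀ x ∈ sdom a, (σ a) (bowtie k g h₁ x) = (a x).map (bowtie k g h₂)) ∧
      σ a = tauMap k g h₁ h₂ a := by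
  set β₁ := bowtie k g h₁ with hβ₁
  set β₂ := bowtie k g h₂ with hβ₂
  set E := sandE n k with hE
  have s0 : Fin n := ⟨0, lt_of_lt_of_le hk hkn⟩
  -- σ ⊥ = ⊥
  have smul_bot_left : ∀ x : IS n, smul n k ⊥ x = ⊥ := fun x => by
    simp [smul, PEquiv.bot_trans]
  have smul_bot_right : ∀ x : IS n, smul n k x ⊥ = ⊥ := fun x => by
    simp [smul, PEquiv.trans_bot]
  have hbot : σ ⊥ = ⊥ := by
    have h := hσ ⊥ (σ.symm ⊥)
    rwa [smul_bot_left, Equiv.apply_symm_apply, smul_bot_right] at h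
  intro a ⟨b, c, hbc⟩
  set p : IS n := b.trans E with hp_def
  set q : IS n := E.trans c with hq_def
  have hpA : ∀ (u z : Fin n), p u = some z → (z:ℕ) < k := by
    intro u z h
    exact bind_sandE_lt (h : (b u).bind E = some z)
  have hpE : p.trans E = p := by
    apply PEquiv.ext
    intro u
    rw [IS_trans_apply]
    rcases hpu : p u with _ | z
    · rfl
    · have hz := hpA u z hpu
      simp [sandE_apply, hz, hE]
  have ha' : p.trans q = a := by
    rw [hq_def, ← PEquiv.trans_assoc, hpE, ← hbc]
    rfl
  have hsmulpq : smul n k p q = a := by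
    show (p.trans E).trans q = a
    rw [hpE, ha']
  -- left probes: σ q on A
  have hq : ∀ z : Fin n, (z:ℕ) < k → σ q (β₂ z) = (q z).map β₂ := by
    intro z hz
    have key := hσ (PEquiv.single s0 z) q
    have h1 : (PEquiv.single s0 z).trans E = PEquiv.single s0 z :=
      PEquiv.single_trans_of_mem s0 (sandE_mem hz)
    have h3 : smul n k (PEquiv.single (β₁ s0) (β₂ z)) (σ q) (β₁ s0)
        = σ q (β₂ z) := by
      show (((PEquiv.single (β₁ s0) (β₂ z)).trans E).trans (σ q)) (β₁ s0) = _
      rw [PEquiv.single_trans_of_mem _ (sandE_mem (bowtie_lt hz)), IS_trans_apply,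
        PEquiv.single_apply]
      rfl
    rcases hqz : q z with _ | y
    · have h2 : smul n k (PEquiv.single s0 z) q = ⊥ := by
        show ((PEquiv.single s0 z).trans E).trans q = ⊥
        rw [h1]
        apply PEquiv.ext
        intro u
        rw [IS_trans_apply, PEquiv.bot_apply]
        by_cases hu : u = s0
        · subst hu
          rw [PEquiv.single_apply, Option.bind_some, hqz]
        · rw [PEquiv.single_apply_of_ne (Ne.symm hu)]
          rfl
      rw [h2, hbot, hform] at key
      have h4 := congrArg (fun f : IS n => f (β₁ s0)) key.symm
      simp only [PEquiv.bot_apply] at h4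
      rw [h3] at h4
      rw [h4]
      rfl
    · have h2 : smul n k (PEquiv.single s0 z) q = PEquiv.single s0 y := by
        show ((PEquiv.single s0 z).trans E).trans q = _
        rw [h1]
        exact PEquiv.single_trans_of_mem s0 hqz
      rw [h2, hform, hform] at key
      have h4 := congrArg (fun f : IS n => f (β₁ s0)) key
      simp only [PEquiv.single_apply] at h4
      rw [h3] at h4
      rw [← h4]
      rfl
  -- right probes: σ p composed with E
  have hp : ∀ (u z : Fin n), (z:ℕ) < k →
      ((σ p u).bind E = some (β₁ z) ↔ ∃ x, p x = some z ∧ u = β₁ x) := by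
    intro u z hz
    have key := hσ p (PEquiv.single z s0)
    have hsp : smul n k p (PEquiv.single z s0) = p.trans (PEquiv.single z s0) := by
      show (p.trans E).trans _ = _
      rw [hpE]
    have heval0 : ∀ u' : Fin n, smul n k (σ p) (PEquiv.single (β₁ z) (β₂ s0)) u'
        = ((σ p u').bind E).bind (PEquiv.single (β₁ z) (β₂ s0)) := fun _ => rfl
    rcases hx : p.symm z with _ | x
    · have h2 : p.trans (PEquiv.single z s0) = ⊥ := by
        apply PEquiv.ext
        intro u'
        rw [IS_trans_apply, PEquiv.bot_apply]
        rcases hpu : p u' with _ | w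
        · rfl
        · have hwz : z ≠ w := by
            rintro rfl
            rw [p.eq_some_iff.2 hpu] at hx
            cases hx
          rw [Option.bind_some]
          exact PEquiv.single_apply_of_ne hwz s0
      rw [hsp, h2, hbot, hform] at key
      constructor
      · intro hsome
        have h4 := congrArg (fun f : IS n => f u) key.symm
        simp only [PEquiv.bot_apply] at h4
        rw [heval0 u, hsome, Option.bind_some, PEquiv.single_apply] at h4
        cases h4
      · rintro ⟨x', hx', -⟩
        rw [p.eq_some_iff.2 hx'] at hx
        cases hx
    · have hpx : p x = some z := p.eq_some_iff.1 hx
      have h2 : p.trans (PEquiv.single z s0) = PEquiv.single x s0 :=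
        PEquiv.trans_single_of_mem s0 hpx
      rw [hsp, h2, hform, hform] at key
      have heval := congrArg (fun f : IS n => f u) key
      rw [heval0 u] at heval
      constructor
      · intro hsome
        rw [hsome, Option.bind_some, PEquiv.single_apply] at heval
        by_cases hu : u = β₁ x
        · exact ⟨x, hpx, hu⟩
        · rw [PEquiv.single_apply_of_ne (fun hh => hu hh.symm)] at heval
          cases heval
      · rintro ⟨x', hx', rfl⟩
        have hxx : x' = x := by
          have h5 := p.eq_some_iff.2 hx'
          rw [hx] at h5
          exact (Option.some_injective _ h5).symm
        subst hxx
        rw [PEquiv.single_apply] at heval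
        rcases hbind : (σ p (β₁ x')).bind E with _ | w
        · rw [hbind] at heval
          simp at heval
        · rw [hbind, Option.bind_some] at heval
          by_cases hw : w = β₁ z
          · rw [hw]
          · rw [PEquiv.single_apply_of_ne (fun hh => hw hh.symm)] at heval
            simp at heval
  -- evaluation of tauMap
  have tau_eval : ∀ u : Fin n, tauMap k g h₁ h₂ a u = (a (β₁.symm u)).map β₂ := by
    intro u
    show ((β₁.symm.toPEquiv u).bind a).bind β₂.toPEquiv = _
    rw [Equiv.toPEquiv_apply, Option.bind_some]
    cases a (β₁.symm u) <;> rfl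
  have hσa : σ a = smul n k (σ p) (σ q) := by
    rw [← hsmulpq, hσ]
  -- main equality
  have main : σ a = tauMap k g h₁ h₂ a := by
    apply PEquiv.ext
    intro u
    rw [tau_eval, hσa]
    rw [show smul n k (σ p) (σ q) u = ((σ p u).bind E).bind (σ q) from rfl]
    have hu : u = β₁ (β₁.symm u) := (Equiv.apply_symm_apply β₁ u).symm
    set x := β₁.symm u with hx_def
    rw [← ha', IS_trans_apply]
    rcases hpx : p x with _ | z
    · rw [Option.bind_none, Option.map_none]
      rcases hbind : (σ p u).bind E with _ | w
      · rfl
      · exfalso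
        have hwk : (w:ℕ) < k := bind_sandE_lt hbind
        have hz'k : ((β₁.symm w : Fin n) : ℕ) < k := by
          by_contra hcon
          exact (bowtie_not_lt (g := g) (h := h₁) hcon)
            (by rw [← hβ₁, Equiv.apply_symm_apply]; exact hwk)
        obtain ⟨x', hx', hux'⟩ := (hp u (β₁.symm w) hz'k).1
          (by rw [hbind, Equiv.apply_symm_apply])
        have hxx : x' = x := β₁.injective (by rw [← hux', hu])
        rw [hxx, hpx] at hx'
        cases hx'
    · have hz := hpA x z hpx
      have hbind : (σ p u).bind E = some (β₁ z) :=
        (hp u z hz).2 ⟨x, hpx, hu⟩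
      rw [hbind, Option.bind_some, Option.bind_some]
      rw [show β₁ z = β₂ z from bowtie_congr g h₁ h₂ hz]
      exact hq z hz
  refine ⟨?_, ?_, main⟩
  · ext u
    simp only [sdom, Set.mem_setOf_eq, Set.mem_image, main, tau_eval]
    constructor
    · intro h
      exact ⟨β₁.symm u, by simpa using h, Equiv.apply_symm_apply β₁ u⟩
    · rintro ⟨x, hx, rfl⟩
      simpa [Equiv.symm_apply_apply] using hx
  · intro x _
    rw [main, tau_eval, Equiv.symm_apply_apply]
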